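/- There exist monotone access structures that cannot be realized by any weighted threshold scheme. Concretely, for the access structure on four participants whose minimal authorized sets are {1,2} and {3,4}, there do not exist natural-number weights w₁, w₂, w₃, w₄ and a threshold t such that for every subset X of {1,2,3,4}, the total weight of X is at least t if and only if X contains {1,2} or contains {3,4}. -/

import Mathlib

/-- There exist monotone access structures that cannot be realized by any weighted
threshold scheme: for the access structure on four participants whose minimal
authorized sets are `{0,1}` and `{2,3}`, there are no natural-number weights
`w` and threshold `t` such that a subset `X` has total weight at least `t`
iff `X` contains `{0,1}` or `{2,3}`. -/
theorem no_weighted_threshold_for_AB_CD :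
    ¬ ∃ (w : Fin 4 → ℕ) (t : ℕ),
      ∀ X : Finset (Fin 4),
        (t ≤ ∑ i ∈ X, w i) ↔
          (({0, 1} : Finset (Fin 4)) ⊆ X ∨ ({2, 3} : Finset (Fin 4)) ⊆ X) := by
  rintro ⟨w, t, h⟩
  have h01 : t ≤ ∑ i ∈ ({0, 1} : Finset (Fin 4)), w i :=
    (h {0, 1}).mpr (Or.inl (by decide))
  have h23 : t ≤ ∑ i ∈ ({2, 3} : Finset (Fin 4)), w i :=
    (h {2, 3}).mpr (Or.inr (by decide))
  have h03 : ¬ t ≤ ∑ i ∈ ({0, 3} : Finset (Fin 4)), w i := by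
    intro hle
    rcases (h {0, 3}).mp hle with hc | hc <;> revert hc <;> decide
  have h12 : ¬ t ≤ ∑ i ∈ ({1, 2} : Finset (Fin 4)), w i := by
    intro hle
    rcases (h {1, 2}).mp hle with hc | hc <;> revert hc <;> decide
  simp [Finset.sum_insert, Finset.sum_pair, show (0:Fin 4) ≠ 1 by decide,
    show (2:Fin 4) ≠ 3 by decide, show (0:Fin 4) ≠ 3 by decide,
    show (1:Fin 4) ≠ 2 by decide] at h01 h23 h03 h12
  omega
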